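/- arXiv:1808.06487 — 2 statements merged into one kernel-verified Lean document; each statement's English description precedes it below -/
import Mathlib

section
/- In the decoding setup for toric codes: if (g,h) lies in the kernel of the map (g,h) ↦ (g(P)y(P) − h(P))_{P∈T}, where y = f + e with f ∈ F_q[U], error e supported on T₀ ⊆ T with |T₀| ≤ t, and the minimum distance of C_{□+□̃} exceeds t, then g vanishes on T₀ and h = g·f as evaluation vectors. -/
open MvPolynomial

/-- Evaluation of a two-variable polynomial at all points of the torus `(Fˣ)²`. -/
noncomputable def torusEval (F : Type*) [Field F] :
    MvPolynomial (Fin 2) F →ₗ[F] (Fˣ × Fˣ → F) :=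
  LinearMap.pi fun t : Fˣ × Fˣ =>
    (MvPolynomial.aeval fun i : Fin 2 => if i = 0 then (t.1 : F) else (t.2 : F)).toLinearMap

/-- The span of monomials with exponent vectors in `U`. -/
noncomputable def monSpan (F : Type*) [Field F] (U : Set (ℕ × ℕ)) : Submodule F (MvPolynomial (Fin 2) F) :=
  Submodule.span F {m : MvPolynomial (Fin 2) F | ∃ u ∈ U, m = X 0 ^ u.1 * X 1 ^ u.2}

/-- The toric code associated to the exponent set `U`. -/
noncomputable def toricCode (F : Type*) [Field F] (U : Set (ℕ × ℕ)) :
    Submodule F (Fˣ × Fˣ → F) :=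
  Submodule.map (torusEval F) (monSpan F U)

lemma torusEval_mul (F : Type*) [Field F] (a b : MvPolynomial (Fin 2) F) (P : Fˣ × Fˣ) :
    torusEval F (a * b) P = torusEval F a P * torusEval F b P := by
  simp [torusEval]

lemma mul_mem_monSpan (F : Type*) [Field F] {U Ut : Set (ℕ × ℕ)}
    {f g : MvPolynomial (Fin 2) F} (hf : f ∈ monSpan F U) (hg : g ∈ monSpan F Ut) :
    f * g ∈ monSpan F (Set.image2 (· + ·) U Ut) := by
  induction hf using Submodule.span_induction with
  | mem m hm =>
    induction hg using Submodule.span_induction with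
    | mem n hn =>
      obtain ⟨u, hu, rfl⟩ := hm
      obtain ⟨v, hv, rfl⟩ := hn
      apply Submodule.subset_span
      refine ⟨u + v, ⟨u, hu, v, hv, rfl⟩, ?_⟩
      simp [pow_add]; ring
    | zero => simp
    | add a b _ _ ha hb => rw [mul_add]; exact Submodule.add_mem _ ha hb
    | smul c a _ ha => rw [mul_smul_comm]; exact Submodule.smul_mem _ c ha
  | zero => simp
  | add a b _ _ ha hb => rw [add_mul]; exact Submodule.add_mem _ ha hb
  | smul c a _ ha => rw [smul_mul_assoc]; exact Submodule.smul_mem _ c ha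

/-- Error locating: let `y = ev f + e` with `f ∈ F_q[U]` and error `e` supported on
`T₀` with `|T₀| ≤ t`, and suppose the minimum distance of `C_{□+□̃}` exceeds `t`.
If `(g,h) ∈ F_q[Ut] ⊕ F_q[U+Ut]` is in the kernel of
`(g,h) ↦ (g(P)y(P) − h(P))_P`, then `g` vanishes on `T₀` and `h = g·f` as
evaluation vectors. -/
theorem toric_error_locating (F : Type*) [Field F] [Fintype F] [DecidableEq F]
    (U Ut : Set (ℕ × ℕ)) (t : ℕ)
    (f g h : MvPolynomial (Fin 2) F)
    (hf : f ∈ monSpan F U) (hg : g ∈ monSpan F Ut)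
    (hh : h ∈ monSpan F (Set.image2 (· + ·) U Ut))
    (e : Fˣ × Fˣ → F) (T₀ : Finset (Fˣ × Fˣ))
    (hsupp : ∀ P : Fˣ × Fˣ, P ∈ T₀ ↔ e P ≠ 0) (hT₀ : T₀.card ≤ t)
    (hdist : ∀ c ∈ toricCode F (Set.image2 (· + ·) U Ut), c ≠ 0 → t < hammingNorm c)
    (y : Fˣ × Fˣ → F) (hy : y = torusEval F f + e)
    (hker : ∀ P : Fˣ × Fˣ, torusEval F g P * y P - torusEval F h P = 0) :
    (∀ P ∈ T₀, torusEval F g P = 0) ∧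
    (∀ P : Fˣ × Fˣ, torusEval F h P = torusEval F g P * torusEval F f P) := by
  set c : Fˣ × Fˣ → F := torusEval F (g * f - h) with hc
  have hcP : ∀ P, c P = torusEval F g P * torusEval F f P - torusEval F h P := by
    intro P
    simp only [hc, map_sub, Pi.sub_apply, torusEval_mul]
  have hmem : c ∈ toricCode F (Set.image2 (· + ·) U Ut) :=
    ⟨g * f - h, Submodule.sub_mem _ (by rw [mul_comm]; exact mul_mem_monSpan F hf hg) hh, rfl⟩
  -- c P = - g P * e P
  have hce : ∀ P, c P = -(torusEval F g P * e P) := by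
    intro P
    have := hker P
    rw [hy] at this
    simp only [Pi.add_apply] at this
    rw [hcP]
    linear_combination this
  have hzero : c = 0 := by
    by_contra hne
    have hlt := hdist c hmem hne
    have hle : hammingNorm c ≤ T₀.card := by
      apply Finset.card_le_card
      intro P hP
      simp only [hammingNorm, Finset.mem_filter] at hP
      rw [hsupp]
      intro he
      exact hP.2 (by rw [hce, he, mul_zero, neg_zero])
    omega
  have heval : ∀ P, torusEval F h P = torusEval F g P * torusEval F f P := by
    intro P
    have : c P = 0 := by rw [hzero]; rfl
    rw [hcP] at this
    linear_combination -this
  refine ⟨?_, heval⟩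
  intro P hP
  have he := (hsupp P).mp hP
  have : c P = 0 := by rw [hzero]; rfl
  rw [hce] at this
  have : torusEval F g P * e P = 0 := by linear_combination -this
  rcases mul_eq_zero.mp this with h1 | h1
  · exact h1
  · exact absurd h1 he
end

section
/- In the decoding setup: if (g,h) is in the kernel of the map (g,h) ↦ (g(P)y(P)−h(P))_P with g ≠ 0 and g vanishing on the error support, and if d(C_□̃) > n − d(C_□), then there is a unique f ∈ F_q[U] with h = g·f on the torus, and this f satisfies y(P) = f(P) for all P with g(P) ≠ 0. -/
open MvPolynomial

/-- Error correcting: suppose `(g,h)` lies in the kernel of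
`(g,h) ↦ (g(P)y(P) − h(P))_P`, with `g ≠ 0` (as an evaluation vector) vanishing on
the support of the error `e`, where `y = ev f + e`, and suppose
`d(C_□̃) > n − d(C_□)`.  Then there is a unique codeword `w` of `C_□` with
`h = g·w` on the torus, and this `w` agrees with `y` at every point where
`g` does not vanish. -/
theorem toric_error_correcting (F : Type*) [Field F] [Fintype F] [DecidableEq F]
    (U Ut : Set (ℕ × ℕ)) (dU dUt : ℕ)
    (hdU : ∀ c ∈ toricCode F U, c ≠ 0 → dU ≤ hammingNorm c)
    (hdUt : ∀ c ∈ toricCode F Ut, c ≠ 0 →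
      Fintype.card (Fˣ × Fˣ) - dU < hammingNorm c)
    (f g h : MvPolynomial (Fin 2) F)
    (hf : f ∈ monSpan F U) (hg : g ∈ monSpan F Ut)
    (hh : h ∈ monSpan F (Set.image2 (· + ·) U Ut))
    (e y : Fˣ × Fˣ → F) (hy : y = torusEval F f + e)
    (hg0 : torusEval F g ≠ 0)
    (hgvan : ∀ P : Fˣ × Fˣ, e P ≠ 0 → torusEval F g P = 0)
    (hker : ∀ P : Fˣ × Fˣ, torusEval F g P * y P - torusEval F h P = 0) :
    (∃! w : Fˣ × Fˣ → F, w ∈ toricCode F U ∧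
        ∀ P : Fˣ × Fˣ, torusEval F h P = torusEval F g P * w P) ∧
    (∀ w : Fˣ × Fˣ → F, w ∈ toricCode F U →
      (∀ P : Fˣ × Fˣ, torusEval F h P = torusEval F g P * w P) →
      ∀ P : Fˣ × Fˣ, torusEval F g P ≠ 0 → y P = w P) := by
  classical
  have hge : ∀ P : Fˣ × Fˣ, torusEval F g P * e P = 0 := by
    intro P
    by_cases he : e P = 0
    · simp [he]
    · simp [hgvan P he]
  -- key: h = g * (ev f) pointwise
  have hkey : ∀ P : Fˣ × Fˣ, torusEval F h P = torusEval F g P * torusEval F f P := by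
    intro P
    have h1 := hker P
    rw [hy] at h1
    simp only [Pi.add_apply] at h1
    linear_combination -h1 + hge P
  -- uniqueness core: any two satisfying codewords agree
  have huniq : ∀ w w' : Fˣ × Fˣ → F, w ∈ toricCode F U → w' ∈ toricCode F U →
      (∀ P : Fˣ × Fˣ, torusEval F h P = torusEval F g P * w P) →
      (∀ P : Fˣ × Fˣ, torusEval F h P = torusEval F g P * w' P) →
      w = w' := by
    intro w w' hwm hw'm hwe hw'e
    by_contra hne
    have hc : w - w' ∈ toricCode F U := Submodule.sub_mem _ hwm hw'm
    have hc0 : w - w' ≠ 0 := sub_ne_zero.mpr hne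
    have h1 : dU ≤ hammingNorm (w - w') := hdU _ hc hc0
    have hgmem : torusEval F g ∈ toricCode F Ut := ⟨g, hg, rfl⟩
    have h2 : Fintype.card (Fˣ × Fˣ) - dU < hammingNorm (torusEval F g) :=
      hdUt _ hgmem hg0
    have hdisj : Disjoint (Finset.univ.filter fun P => (w - w') P ≠ 0)
        (Finset.univ.filter fun P => torusEval F g P ≠ 0) := by
      rw [Finset.disjoint_filter]
      intro P _ hP hgP
      apply hP
      have := hwe P
      have := hw'e P
      have : torusEval F g P * (w P - w' P) = 0 := by
        linear_combination -hwe P + hw'e P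
      have := mul_eq_zero.mp this
      simp only [Pi.sub_apply]
      tauto
    have h3 : hammingNorm (w - w') + hammingNorm (torusEval F g) ≤
        Fintype.card (Fˣ × Fˣ) := by
      rw [hammingNorm, hammingNorm, ← Finset.card_union_of_disjoint hdisj]
      exact Finset.card_le_univ _
    omega
  refine ⟨⟨torusEval F f, ⟨⟨f, hf, rfl⟩, hkey⟩, ?_⟩, ?_⟩
  · intro w hw
    exact huniq w (torusEval F f) hw.1 ⟨f, hf, rfl⟩ hw.2 hkey
  · intro w hwm hwe P hgP
    have h1 := hker P
    have h2 := hwe P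
    have : torusEval F g P * y P = torusEval F g P * w P := by
      linear_combination h1 + h2
    exact mul_left_cancel₀ hgP this
end
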